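/- Under the setup of the tridiagonal recurrence roots with γ = d_+ = (√n+√m)²/m and n/m → λ ∈ (0,1], the quantity ω_i := |ρ_i^−|/|ρ_{i−1}^+| satisfies: there exist constants 0 < C₁ < C₂ such that for all sufficiently large n and all 2 ≤ i ≤ n, C₁ √((n−i+1)/n) ≤ 1 − ω_i ≤ C₂ √((n−i+1)/n). -/
import Mathlib


open Real Filter

/-- `ρ_i^+` with `γ = d₊ = (√n+√m)²/m` (so `γm = (√n+√m)²`). -/
noncomputable def rhoP (n m i : ℕ) : ℝ :=
  -(1 / 2) * (((Real.sqrt n + Real.sqrt m) ^ 2 - ((m : ℝ) - n + 2 * i - 1)) +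
    Real.sqrt (((Real.sqrt n + Real.sqrt m) ^ 2 - ((m : ℝ) - n + 2 * i - 1)) ^ 2 -
      4 * ((m : ℝ) - n + i - 1) * ((i : ℝ) - 1)))

/-- `ρ_i^-`. -/
noncomputable def rhoM (n m i : ℕ) : ℝ :=
  -(1 / 2) * (((Real.sqrt n + Real.sqrt m) ^ 2 - ((m : ℝ) - n + 2 * i - 1)) -
    Real.sqrt (((Real.sqrt n + Real.sqrt m) ^ 2 - ((m : ℝ) - n + 2 * i - 1)) ^ 2 -
      4 * ((m : ℝ) - n + i - 1) * ((i : ℝ) - 1)))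


lemma auxDi (s t u : ℝ) (hs1 : 1 ≤ s) (hst : s ≤ t) (hu1 : 1 ≤ u) :
    4 * t ^ 2 * u ≤ 4 * ((s + t) ^ 2 - 1) * u - 4 * s * t + 1 := by
  nlinarith [mul_le_mul_of_nonneg_left hu1
    (show (0:ℝ) ≤ 4 * (s ^ 2 + 2 * s * t - 1) by nlinarith)]

lemma auxD' (s t u : ℝ) (hs1 : 1 ≤ s) (hst : s ≤ t) (hu1 : 1 ≤ u) :
    4 * ((s + t) ^ 2 - 1) * (u + 1) - 4 * s * t + 1 ≤ 36 * t ^ 2 * u := by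
  nlinarith [mul_le_mul (show (s + t) ^ 2 - 1 ≤ 4 * t ^ 2 by nlinarith)
    (show u + 1 ≤ 2 * u by linarith) (by linarith) (by nlinarith)]

lemma auxMono (s t u : ℝ) (hs1 : 1 ≤ s) (hst : s ≤ t) :
    4 * ((s + t) ^ 2 - 1) * u - 4 * s * t + 1 ≤
      4 * ((s + t) ^ 2 - 1) * (u + 1) - 4 * s * t + 1 := by nlinarith

lemma auxB (s t u : ℝ) (hs1 : 1 ≤ s) (hst : s ≤ t) (hus : u ≤ s ^ 2) :
    2 * u + 2 * s * t + 1 ≤ 5 * s * t := by nlinarith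

lemma auxLow (s t v a b B' : ℝ) (hs1 : 1 ≤ s) (hst : s ≤ t) (hv0 : 0 ≤ v)
    (hvs : v ≤ s) (ha : 2 * t * v ≤ a) (hb : 0 ≤ b) (hB : B' ≤ 5 * s * t)
    (hbv : b ≤ 6 * t * v) : v * (B' + b) ≤ (2 + a + b) * (6 * s) := by
  nlinarith [mul_le_mul_of_nonneg_left hB hv0,
    mul_le_mul_of_nonneg_left hbv hv0,
    mul_le_mul_of_nonneg_left (mul_le_mul_of_nonneg_right hvs hv0)
      (show (0:ℝ) ≤ 6 * t by linarith),
    mul_le_mul_of_nonneg_left ha (show (0:ℝ) ≤ 6 * s by linarith),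
    mul_nonneg (show (0:ℝ) ≤ 6 * s by linarith) hb]

lemma auxUp (s t v a b B' : ℝ) (hs1 : 1 ≤ s) (hst : s ≤ t) (hv1 : 1 ≤ v)
    (hab : a ≤ b) (hbv : b ≤ 6 * t * v) (hB : 2 * s * t ≤ B' + b) :
    (2 + a + b) * s ≤ 7 * v * (B' + b) := by
  have ht1 : 1 ≤ t := le_trans hs1 hst
  have htv : 1 ≤ t * v := by nlinarith
  have h6 : 2 + a + b ≤ 14 * (t * v) := by linarith
  nlinarith [mul_le_mul_of_nonneg_right h6 (show (0:ℝ) ≤ s by linarith),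
    mul_le_mul_of_nonneg_left hB (show (0:ℝ) ≤ 7 * v by nlinarith)]

set_option maxHeartbeats 1000000 in
/-- in the regime `n ≤ m`, `n/m → λ ∈ (0,1]`, the quantity
`ω_i = |ρ_i^-|/|ρ_{i-1}^+|` satisfies
`C₁√((n-i+1)/n) ≤ 1 - ω_i ≤ C₂√((n-i+1)/n)` for all large `n` and `2 ≤ i ≤ n`. -/
theorem one_sub_omega_bounds (l : ℝ) (hl0 : 0 < l) (hl1 : l ≤ 1)
    (m : ℕ → ℕ) (hnm : ∀ n, n ≤ m n)
    (hlim : Tendsto (fun n : ℕ => (n : ℝ) / (m n)) atTop (nhds l)) :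
    ∃ C₁ C₂ : ℝ, 0 < C₁ ∧ C₁ < C₂ ∧ ∃ N : ℕ, ∀ n ≥ N, ∀ i : ℕ, 2 ≤ i → i ≤ n →
      C₁ * Real.sqrt (((n : ℝ) - i + 1) / n) ≤
          1 - |rhoM n (m n) i| / |rhoP n (m n) (i - 1)| ∧
      1 - |rhoM n (m n) i| / |rhoP n (m n) (i - 1)| ≤
          C₂ * Real.sqrt (((n : ℝ) - i + 1) / n) := by
  refine ⟨1/6, 7, by norm_num, by norm_num, 0, ?_⟩
  intro n _ i hi2 hin
  set M := m n with hMdef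
  have hnM : n ≤ M := hnm n
  have hn2 : 2 ≤ n := le_trans hi2 hin
  set s : ℝ := Real.sqrt n with hs
  set t : ℝ := Real.sqrt M with ht
  have hs0 : 0 ≤ s := Real.sqrt_nonneg _
  have ht0 : 0 ≤ t := Real.sqrt_nonneg _
  have hs2 : s ^ 2 = (n : ℝ) := Real.sq_sqrt (by positivity)
  have ht2 : t ^ 2 = (M : ℝ) := Real.sq_sqrt (by positivity)
  have hs1 : 1 ≤ s := by
    rw [hs, show (1:ℝ) = Real.sqrt 1 by simp]
    exact Real.sqrt_le_sqrt (by exact_mod_cast Nat.one_le_of_lt hn2)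
  have hst : s ≤ t := Real.sqrt_le_sqrt (by exact_mod_cast hnM)
  have ht1 : 1 ≤ t := le_trans hs1 hst
  have hiR : (2:ℝ) ≤ (i:ℝ) := by exact_mod_cast hi2
  have hinR : (i:ℝ) ≤ s ^ 2 := by rw [hs2]; exact_mod_cast hin
  have hnc : (n:ℝ) = s ^ 2 := hs2.symm
  have hMc : (M:ℝ) = t ^ 2 := ht2.symm
  set u : ℝ := s ^ 2 - (i:ℝ) + 1 with hu
  have hu1 : 1 ≤ u := by rw [hu]; linarith
  have hu0 : 0 ≤ u := by linarith
  have hus : u ≤ s ^ 2 := by rw [hu]; linarith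
  have hcast : ((i - 1 : ℕ) : ℝ) = (i:ℝ) - 1 := by
    rw [Nat.cast_sub (by omega)]; norm_num
  set Bi : ℝ := 2 * u + 2 * s * t - 1 with hBi
  set Di : ℝ := 4 * ((s + t) ^ 2 - 1) * u - 4 * s * t + 1 with hDi
  set B' : ℝ := 2 * u + 2 * s * t + 1 with hB'
  set D' : ℝ := 4 * ((s + t) ^ 2 - 1) * (u + 1) - 4 * s * t + 1 with hD'
  set a : ℝ := Real.sqrt Di with ha
  set b : ℝ := Real.sqrt D' with hb
  have hst0 : 0 ≤ s * t := mul_nonneg hs0 ht0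
  have hst1 : 1 ≤ s * t := by nlinarith
  have ha0 : 0 ≤ a := Real.sqrt_nonneg _
  have hb0 : 0 ≤ b := Real.sqrt_nonneg _
  have hBi0 : 0 ≤ Bi := by rw [hBi]; linarith
  have hB'0 : 0 ≤ B' := by rw [hB']; linarith
  -- |rhoM n M i| = (Bi - a)/2
  have eB : (s + t) ^ 2 - ((M:ℝ) - n + 2 * i - 1) = Bi := by
    rw [hBi, hu, hMc, hnc]; ring
  have eD : ((s + t) ^ 2 - ((M:ℝ) - n + 2 * i - 1)) ^ 2
      - 4 * ((M:ℝ) - n + i - 1) * ((i:ℝ) - 1) = Di := by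
    rw [hDi, hu, hMc, hnc]; ring
  have hrhoM : rhoM n M i = -(1/2) * (Bi - a) := by
    rw [rhoM]
    rw [← hs, ← ht]
    rw [eD]
    rw [eB]
  have hident : Bi ^ 2 - Di = 4 * (t ^ 2 - u) * (s ^ 2 - u) := by
    rw [hBi, hDi]; ring
  have htu : u ≤ t ^ 2 := le_trans hus (pow_le_pow_left₀ hs0 hst 2)
  have haBi : a ≤ Bi := by
    have h1 : Di ≤ Bi ^ 2 := by
      have hprod : 0 ≤ 4 * (t ^ 2 - u) * (s ^ 2 - u) :=
        mul_nonneg (by linarith) (by linarith)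
      linarith
    calc a ≤ Real.sqrt (Bi ^ 2) := Real.sqrt_le_sqrt h1
      _ = Bi := Real.sqrt_sq hBi0
  have hM1 : |rhoM n M i| = (Bi - a) / 2 := by
    rw [hrhoM, abs_of_nonpos (by linarith)]; ring
  -- |rhoP n M (i-1)| = (B' + b)/2
  have eB' : (s + t) ^ 2 - ((M:ℝ) - n + 2 * ((i - 1 : ℕ):ℝ) - 1) = B' := by
    rw [hcast, hB', hu, hMc, hnc]; ring
  have eD' : ((s + t) ^ 2 - ((M:ℝ) - n + 2 * ((i - 1 : ℕ):ℝ) - 1)) ^ 2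
      - 4 * ((M:ℝ) - n + ((i - 1 : ℕ):ℝ) - 1) * (((i - 1 : ℕ):ℝ) - 1) = D' := by
    rw [hcast, hD', hu, hMc, hnc]; ring
  have hrhoP : rhoP n M (i - 1) = -(1/2) * (B' + b) := by
    rw [rhoP]
    rw [← hs, ← ht]
    rw [eD']
    rw [eB']
  have hP1 : |rhoP n M (i - 1)| = (B' + b) / 2 := by
    rw [hrhoP, abs_of_nonpos (by linarith)]; ring
  -- sqrt facts
  have hsu0 : 0 ≤ Real.sqrt u := Real.sqrt_nonneg _
  have hsu1 : 1 ≤ Real.sqrt u := by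
    rw [show (1:ℝ) = Real.sqrt 1 by simp]
    exact Real.sqrt_le_sqrt hu1
  have hsus : Real.sqrt u ≤ s := by
    calc Real.sqrt u ≤ Real.sqrt (s ^ 2) := Real.sqrt_le_sqrt hus
      _ = s := Real.sqrt_sq hs0
  have hsq_u : Real.sqrt u ^ 2 = u := Real.sq_sqrt hu0
  have halow : 2 * t * Real.sqrt u ≤ a := by
    have h1 : (2 * t * Real.sqrt u) ^ 2 ≤ Di := by
      have : (2 * t * Real.sqrt u) ^ 2 = 4 * t ^ 2 * u := by
        rw [mul_pow, mul_pow, hsq_u]; ring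
      rw [this, hDi]
      exact auxDi s t u hs1 hst hu1
    calc 2 * t * Real.sqrt u = Real.sqrt ((2 * t * Real.sqrt u) ^ 2) :=
          (Real.sqrt_sq (by positivity)).symm
      _ ≤ a := Real.sqrt_le_sqrt h1
  have hbup : b ≤ 6 * t * Real.sqrt u := by
    have h1 : D' ≤ (6 * t * Real.sqrt u) ^ 2 := by
      have h2 : (6 * t * Real.sqrt u) ^ 2 = 36 * t ^ 2 * u := by
        rw [mul_pow, mul_pow, hsq_u]; ring
      rw [h2, hD']
      exact auxD' s t u hs1 hst hu1
    calc b ≤ Real.sqrt ((6 * t * Real.sqrt u) ^ 2) := Real.sqrt_le_sqrt h1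
      _ = 6 * t * Real.sqrt u := Real.sqrt_sq (by positivity)
  have hab : a ≤ b := by
    apply Real.sqrt_le_sqrt
    rw [hDi, hD']; exact auxMono s t u hs1 hst
  have hB'low : 2 * s * t ≤ B' := by rw [hB']; linarith
  have hB'up : B' ≤ 5 * s * t := by rw [hB']; exact auxB s t u hs1 hst hus
  have hden : 0 < B' + b := by
    have hB'3 : 3 ≤ B' := by rw [hB']; linarith
    linarith
  -- rewrite the ratio
  have hratio : 1 - ((Bi - a) / 2) / ((B' + b) / 2) = (2 + a + b) / (B' + b) := by
    have h2 : Bi = B' - 2 := by rw [hBi, hB']; ring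
    rw [h2]
    field_simp
    ring
  have hsqrtfrac : Real.sqrt (((n:ℝ) - i + 1) / n) = Real.sqrt u / s := by
    have h1 : ((n:ℝ) - i + 1) / n = u / s ^ 2 := by rw [hnc, hu]
    rw [h1, Real.sqrt_div hu0, Real.sqrt_sq hs0]
  rw [hM1, hP1, hratio, hsqrtfrac]
  have hs0' : (0:ℝ) < s := by linarith
  constructor
  · have h1 : 1/6 * (Real.sqrt u / s) = Real.sqrt u / (6 * s) := by ring
    rw [h1, div_le_div_iff₀ (by positivity) hden]
    exact auxLow s t (Real.sqrt u) a b B' hs1 hst hsu0 hsus halow hb0 hB'up hbup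
  · have h1 : (7:ℝ) * (Real.sqrt u / s) = 7 * Real.sqrt u / s := by ring
    rw [h1, div_le_div_iff₀ hden hs0']
    exact auxUp s t (Real.sqrt u) a b B' hs1 hst hsu1 hab hbup (by linarith)
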